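/- (Proposition 3) Let N_sub, N_s be positive integers, N = N_sub · N_s, let M = I_{N_sub} ⊗ 1_{N_s} be the mask matrix, and let U_S^V, U_S^K, U_D^V, U_D^K be J × J real matrices. Define the nested attention map on J × N real matrices by C(D) = U_S^V D ((U_S^K D)^T D ⊙ M) + U_D^V D (U_D^K D)^T D. Let Π be a J × J permutation matrix such that Π U_S^K = U_S^K Π, Π U_S^V = U_S^V Π, Π U_D^K = U_D^K Π, and Π U_D^V = U_D^V Π. Then for every nested permutation matrix Ω = (Π_sub ⊗ I_{N_s}) · diag(Π_1, …, Π_{N_sub}) and every J × N matrix D, C(Πᵀ D Ω) = Πᵀ C(D) Ω (the partial-nested 2D-PE property). -/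

import Mathlib

open Matrix
open scoped Kronecker

noncomputable section

/-- The permutation matrix of a permutation `σ`: entry `(i, j)` is `1` iff `σ i = j`. -/
def permMatrix {I : Type*} [DecidableEq I] (σ : Equiv.Perm I) : Matrix I I ℝ :=
  Matrix.of fun i j => if σ i = j then 1 else 0

/-- The block-diagonal matrix `diag(B 0, …, B (Nsub - 1))`, indexed by
`Fin Nsub × Fin Ns` (block index first). -/
def blockDiag {Nsub Ns : ℕ} (B : Fin Nsub → Matrix (Fin Ns) (Fin Ns) ℝ) :
    Matrix (Fin Nsub × Fin Ns) (Fin Nsub × Fin Ns) ℝ :=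
  Matrix.of fun p q => if p.1 = q.1 then B p.1 p.2 q.2 else 0

/-- The nested permutation matrix `Ω = (Π_sub ⊗ I_{N_s}) · diag(Π_1, …, Π_{N_sub})`. -/
def nestedPermMatrix {Nsub Ns : ℕ} (σsub : Equiv.Perm (Fin Nsub))
    (σs : Fin Nsub → Equiv.Perm (Fin Ns)) :
    Matrix (Fin Nsub × Fin Ns) (Fin Nsub × Fin Ns) ℝ :=
  (permMatrix σsub ⊗ₖ (1 : Matrix (Fin Ns) (Fin Ns) ℝ)) *
    blockDiag (fun k => permMatrix (σs k))

/-- The mask matrix `M = I_{N_sub} ⊗ 1_{N_s}`, where `1_{N_s}` is the all-ones matrix. -/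
def maskMatrix (Nsub Ns : ℕ) : Matrix (Fin Nsub × Fin Ns) (Fin Nsub × Fin Ns) ℝ :=
  (1 : Matrix (Fin Nsub) (Fin Nsub) ℝ) ⊗ₖ (Matrix.of fun _ _ => (1 : ℝ))

/-- The nested attention (NATT) map
`C(D) = U_S^V D ((U_S^K D)ᵀ D ⊙ M) + U_D^V D (U_D^K D)ᵀ D`. -/
def nestedAtt {J Nsub Ns : ℕ} (USV USK UDV UDK : Matrix (Fin J) (Fin J) ℝ)
    (D : Matrix (Fin J) (Fin Nsub × Fin Ns) ℝ) : Matrix (Fin J) (Fin Nsub × Fin Ns) ℝ :=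
  USV * D * (((USK * D)ᵀ * D) ⊙ maskMatrix Nsub Ns) + UDV * D * ((UDK * D)ᵀ * D)

section aux

set_option linter.unusedSectionVars false

variable {I K : Type*} [DecidableEq I] [Fintype I]

lemma permMatrix_mul_apply (σ : Equiv.Perm I) (A : Matrix I K ℝ) (i : I) (j : K) :
    (permMatrix σ * A) i j = A (σ i) j := by
  simp [permMatrix, Matrix.mul_apply, ite_mul]

lemma mul_permMatrix_apply [Fintype K] [DecidableEq K] (σ : Equiv.Perm I)
    (A : Matrix K I ℝ) (i : K) (j : I) :
    (A * permMatrix σ) i j = A i (σ.symm j) := by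
  simp only [permMatrix, Matrix.mul_apply, Matrix.of_apply, mul_ite, mul_one, mul_zero]
  rw [Finset.sum_eq_single (σ.symm j)] <;> simp +contextual [Equiv.eq_symm_apply, eq_comm]

lemma transpose_permMatrix (σ : Equiv.Perm I) : (permMatrix σ)ᵀ = permMatrix σ.symm := by
  ext i j
  simp only [permMatrix, Matrix.transpose_apply, Matrix.of_apply]
  congr 1
  rw [Equiv.symm_apply_eq]
  exact propext eq_comm

lemma permMatrix_mul_transpose (σ : Equiv.Perm I) :
    permMatrix σ * (permMatrix σ)ᵀ = 1 := by
  ext i j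
  rw [_root_.transpose_permMatrix, permMatrix_mul_apply]
  simp [permMatrix, Matrix.one_apply, Equiv.symm_apply_eq]

lemma transpose_mul_permMatrix (σ : Equiv.Perm I) :
    (permMatrix σ)ᵀ * permMatrix σ = 1 := by
  rw [_root_.transpose_permMatrix]
  have := permMatrix_mul_transpose σ.symm
  rwa [_root_.transpose_permMatrix, Equiv.symm_symm] at this

end aux

/-- The nested permutation matrix is the permutation matrix of the "shear" permutation
`(k, s) ↦ (σsub k, σs (σsub k) s)`. -/
lemma nestedPermMatrix_eq_permMatrix {Nsub Ns : ℕ} (σsub : Equiv.Perm (Fin Nsub))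
    (σs : Fin Nsub → Equiv.Perm (Fin Ns)) :
    nestedPermMatrix σsub σs = permMatrix (σsub.prodShear fun k => σs (σsub k)) := by
  ext ⟨k, s⟩ ⟨l, t⟩
  rw [nestedPermMatrix, Matrix.mul_apply, Finset.sum_eq_single (σsub k, s)]
  · simp [_root_.blockDiag, permMatrix, Prod.ext_iff, ite_and]
  · rintro ⟨m, u⟩ - hb
    by_cases h1 : σsub k = m <;> by_cases h2 : s = u <;>
      simp_all [Prod.ext_iff, permMatrix, Matrix.one_apply]
  · simp

lemma maskMatrix_apply {Nsub Ns : ℕ} (p q : Fin Nsub × Fin Ns) :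
    maskMatrix Nsub Ns p q = if p.1 = q.1 then 1 else 0 := by
  simp [maskMatrix, Matrix.one_apply]

/-- Conjugating by a nested permutation and masking commute. -/
lemma hadamard_mask_conj {Nsub Ns : ℕ} (σsub : Equiv.Perm (Fin Nsub))
    (σs : Fin Nsub → Equiv.Perm (Fin Ns))
    (Y : Matrix (Fin Nsub × Fin Ns) (Fin Nsub × Fin Ns) ℝ) :
    ((permMatrix (σsub.prodShear fun k => σs (σsub k)))ᵀ * Y *
        permMatrix (σsub.prodShear fun k => σs (σsub k))) ⊙ maskMatrix Nsub Ns
      = (permMatrix (σsub.prodShear fun k => σs (σsub k)))ᵀ * (Y ⊙ maskMatrix Nsub Ns) *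
        permMatrix (σsub.prodShear fun k => σs (σsub k)) := by
  set τ := σsub.prodShear fun k => σs (σsub k) with hτ
  ext p q
  rw [Matrix.hadamard_apply, mul_permMatrix_apply, mul_permMatrix_apply,
    _root_.transpose_permMatrix, permMatrix_mul_apply, permMatrix_mul_apply, Matrix.hadamard_apply]
  have h1 : (τ.symm p).1 = σsub.symm p.1 := rfl
  have h2 : (τ.symm q).1 = σsub.symm q.1 := rfl
  rw [maskMatrix_apply, maskMatrix_apply, h1, h2]
  congr 1
  simp

/-- Proposition 3: with parameter-sharing (all weight matrices commute with `Π`), the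
nested attention map satisfies the partial-nested 2D-PE property
`C(Πᵀ D Ω) = Πᵀ C(D) Ω`. -/
theorem nestedAtt_partialNestedTwoPE {J Nsub Ns : ℕ} (hNsub : 0 < Nsub) (hNs : 0 < Ns)
    (USV USK UDV UDK : Matrix (Fin J) (Fin J) ℝ) (π : Equiv.Perm (Fin J))
    (hSK : permMatrix π * USK = USK * permMatrix π)
    (hSV : permMatrix π * USV = USV * permMatrix π)
    (hDK : permMatrix π * UDK = UDK * permMatrix π)
    (hDV : permMatrix π * UDV = UDV * permMatrix π)
    (σsub : Equiv.Perm (Fin Nsub)) (σs : Fin Nsub → Equiv.Perm (Fin Ns))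
    (D : Matrix (Fin J) (Fin Nsub × Fin Ns) ℝ) :
    nestedAtt USV USK UDV UDK ((permMatrix π)ᵀ * D * nestedPermMatrix σsub σs)
      = (permMatrix π)ᵀ * nestedAtt USV USK UDV UDK D * nestedPermMatrix σsub σs := by
  rw [nestedPermMatrix_eq_permMatrix]
  set P := permMatrix π with hP
  set Q := permMatrix (σsub.prodShear fun k => σs (σsub k)) with hQ
  have hPP : P * Pᵀ = 1 := permMatrix_mul_transpose π
  have hQQ : Q * Qᵀ = 1 := permMatrix_mul_transpose _
  -- commutation with Pᵀ
  have comm : ∀ U : Matrix (Fin J) (Fin J) ℝ, P * U = U * P → U * Pᵀ = Pᵀ * U := by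
    intro U h
    have h2 : Pᵀ * (P * U) * Pᵀ = Pᵀ * (U * P) * Pᵀ := by rw [h]
    rw [← Matrix.mul_assoc, transpose_mul_permMatrix π, Matrix.one_mul,
      Matrix.mul_assoc, Matrix.mul_assoc, hPP, Matrix.mul_one] at h2
    exact h2
  -- key computation for each (V, K) pair, unmaasked part
  have key : ∀ UV UK : Matrix (Fin J) (Fin J) ℝ, P * UV = UV * P → P * UK = UK * P →
      ∀ X : Matrix (Fin Nsub × Fin Ns) (Fin Nsub × Fin Ns) ℝ,
      UV * (Pᵀ * D * Q) * (Qᵀ * X * Q) = Pᵀ * (UV * D * X) * Q := by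
    intro UV UK hV hK X
    calc UV * (Pᵀ * D * Q) * (Qᵀ * X * Q)
        = (UV * Pᵀ) * (D * ((Q * Qᵀ) * X) * Q) := by
          simp only [Matrix.mul_assoc]
      _ = (Pᵀ * UV) * (D * X * Q) := by rw [comm UV hV, hQQ, Matrix.one_mul]
      _ = Pᵀ * (UV * D * X) * Q := by simp only [Matrix.mul_assoc]
  have keyK : ∀ UK : Matrix (Fin J) (Fin J) ℝ, P * UK = UK * P →
      (UK * (Pᵀ * D * Q))ᵀ * (Pᵀ * D * Q) = Qᵀ * ((UK * D)ᵀ * D) * Q := by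
    intro UK hK
    have h1 : UK * (Pᵀ * D * Q) = Pᵀ * (UK * D) * Q := by
      calc UK * (Pᵀ * D * Q) = (UK * Pᵀ) * (D * Q) := by simp only [Matrix.mul_assoc]
        _ = Pᵀ * (UK * D) * Q := by rw [comm UK hK]; simp only [Matrix.mul_assoc]
    rw [h1]
    calc (Pᵀ * (UK * D) * Q)ᵀ * (Pᵀ * D * Q)
        = Qᵀ * ((UK * D)ᵀ * ((Pᵀᵀ * Pᵀ) * D)) * Q := by
          simp only [Matrix.transpose_mul, Matrix.mul_assoc]
      _ = Qᵀ * ((UK * D)ᵀ * D) * Q := by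
          rw [Matrix.transpose_transpose, hPP, Matrix.one_mul]
  rw [nestedAtt, nestedAtt, keyK USK hSK, keyK UDK hDK, hadamard_mask_conj,
    key USV USK hSV hSK, key UDV UDK hDV hDK, Matrix.mul_add, Matrix.add_mul]
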